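/- arXiv:1207.2628 — 4 statements merged into one kernel-verified Lean document; each statement's English description precedes it below -/
import Mathlib

section
/- For each integer m ≥ 2, let t = 1 + 3·2^{2m+1} ∈ ℚ₂ and f_t(z) = z³ − (3/2) t z². Then the forward orbit of t under f_t is bounded; in particular f_t is post-critically bounded. -/
namespace Stmt12Aux

noncomputable def PP (m : ℕ) : ℚ_[2] := 2 ^ (2 * m + 1)
noncomputable def tt (m : ℕ) : ℚ_[2] := 1 + 3 * PP m
noncomputable def cc (m : ℕ) : ℚ_[2] := -1 + 117 * PP m
noncomputable def gg (m : ℕ) : ℚ_[2] → ℚ_[2] := fun y => y ^ 2 * (y - 3 * tt m) / 4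

def Inv (m : ℕ) (y : ℚ_[2]) : Prop :=
  (∃ k : ℕ, 1 ≤ k ∧ k ≤ m + 1 ∧ ‖y - cc m - 4 ^ k‖ ≤ (1/2 : ℝ) ^ (2 * k + 3)) ∨
    ‖y‖ ≤ (1/2 : ℝ) ^ 3

lemma norm_two : ‖(2 : ℚ_[2])‖ = 1/2 := by
  have h := @Padic.norm_p 2 ⟨Nat.prime_two⟩
  norm_num at h ⊢
  exact_mod_cast h

lemma hpow {a b : ℕ} (h : b ≤ a) : ((1/2 : ℝ)) ^ a ≤ (1/2) ^ b :=
  pow_le_pow_of_le_one (by norm_num) (by norm_num) h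

lemma nadd {a b : ℚ_[2]} {x : ℝ} (ha : ‖a‖ ≤ x) (hb : ‖b‖ ≤ x) : ‖a + b‖ ≤ x :=
  le_trans (Padic.nonarchimedean a b) (max_le ha hb)

lemma nsub {a b : ℚ_[2]} {x : ℝ} (ha : ‖a‖ ≤ x) (hb : ‖b‖ ≤ x) : ‖a - b‖ ≤ x := by
  rw [sub_eq_add_neg]; exact nadd ha (by rwa [norm_neg])

lemma nmul {a b : ℚ_[2]} {x y : ℝ} (ha : ‖a‖ ≤ x) (hb : ‖b‖ ≤ y) : ‖a * b‖ ≤ x * y := by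
  rw [norm_mul]
  exact mul_le_mul ha hb (norm_nonneg b) ((norm_nonneg a).trans ha)

lemma norm_four : ‖(4 : ℚ_[2])‖ = (1/2 : ℝ) ^ 2 := by
  rw [show (4 : ℚ_[2]) = 2 ^ 2 by norm_num, norm_pow, norm_two]

lemma ndiv4 {z : ℚ_[2]} {x : ℝ} (h : ‖z‖ ≤ x) : ‖z / 4‖ ≤ 4 * x := by
  rw [norm_div, norm_four]
  rw [show ((1/2 : ℝ) ^ 2) = 1/4 by norm_num, div_le_iff₀ (by norm_num : (0:ℝ) < 1/4)]
  linarith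

lemma norm_four_pow (k : ℕ) : ‖(4 : ℚ_[2]) ^ k‖ = (1/2 : ℝ) ^ (2 * k) := by
  rw [norm_pow, norm_four, ← pow_mul]

lemma nnat (a : ℕ) : ‖((a : ℕ) : ℚ_[2])‖ ≤ 1 := by
  exact_mod_cast Padic.norm_int_le_one (a : ℤ)

lemma norm_PP (m : ℕ) : ‖PP m‖ = (1/2 : ℝ) ^ (2 * m + 1) := by
  rw [PP, norm_pow, norm_two]

lemma norm_PP_le (m : ℕ) {j : ℕ} (h : j ≤ 2 * m + 1) : ‖PP m‖ ≤ (1/2 : ℝ) ^ j := by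
  rw [norm_PP]; exact hpow h

lemma norm_cc_le_one (m : ℕ) : ‖cc m‖ ≤ 1 := by
  rw [cc]
  refine nadd ?_ ?_
  · rw [norm_neg, norm_one]
  · have h117 : ‖(117 : ℚ_[2])‖ ≤ 1 := by exact_mod_cast nnat 117
    have hP1 : ‖PP m‖ ≤ 1 := by
      have := norm_PP_le m (le_refl (2*m+1)); exact this.trans (hpow (Nat.zero_le _))
    calc ‖(117 : ℚ_[2]) * PP m‖ ≤ 1 * 1 := nmul h117 hP1
    _ = 1 := by norm_num



lemma norm_PP_le_one (m : ℕ) : ‖PP m‖ ≤ 1 := by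
  have := norm_PP_le m (le_refl (2*m+1))
  calc ‖PP m‖ ≤ (1/2 : ℝ) ^ (2*m+1) := this
  _ ≤ (1/2 : ℝ) ^ 0 := hpow (Nat.zero_le _)
  _ = 1 := pow_zero _

/-- norm of an integer literal times `PP m ^ j`, `j ≥ 1`, is at most `(1/2)^(2m+1)`. -/
lemma norm_lit_PP {m : ℕ} (a : ℚ_[2]) (ha : ‖a‖ ≤ 1) {j : ℕ} (hj : 1 ≤ j) :
    ‖a * PP m ^ j‖ ≤ (1/2 : ℝ) ^ (2*m+1) := by
  have h1 : ‖PP m ^ j‖ ≤ (1/2 : ℝ) ^ (2*m+1) := by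
    rw [norm_pow, norm_PP]
    calc ((1/2 : ℝ) ^ (2*m+1)) ^ j ≤ ((1/2 : ℝ) ^ (2*m+1)) ^ 1 :=
      pow_le_pow_of_le_one (by positivity) (by
        apply pow_le_one₀ <;> norm_num) hj
    _ = (1/2 : ℝ) ^ (2*m+1) := pow_one _
  calc ‖a * PP m ^ j‖ ≤ 1 * ((1/2 : ℝ) ^ (2*m+1)) := nmul ha h1
  _ = _ := one_mul _

lemma norm_tt_le_one (m : ℕ) : ‖3 * tt m‖ ≤ 1 := by
  rw [tt]
  have h3 : ‖(3 : ℚ_[2])‖ ≤ 1 := by exact_mod_cast nnat 3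
  have h9 : ‖(9 : ℚ_[2])‖ ≤ 1 := by exact_mod_cast nnat 9
  have : (3 : ℚ_[2]) * (1 + 3 * PP m) = 3 + 9 * PP m := by ring
  rw [this]
  refine nadd h3 ?_
  calc ‖(9:ℚ_[2]) * PP m‖ ≤ 1 * 1 := nmul h9 (norm_PP_le_one m)
  _ = 1 := by norm_num

lemma inv_norm_le_one (m : ℕ) {y : ℚ_[2]} (h : Inv m y) : ‖y‖ ≤ 1 := by
  rcases h with ⟨k, hk1, hkm, hd⟩ | hy
  · have : y = (y - cc m - 4 ^ k) + 4 ^ k + cc m := by ring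
    rw [this]
    refine nadd (nadd ?_ ?_) (norm_cc_le_one m)
    · exact hd.trans (by
        calc (1/2 : ℝ) ^ (2*k+3) ≤ (1/2 : ℝ) ^ 0 := hpow (Nat.zero_le _)
        _ = 1 := pow_zero _)
    · rw [norm_four_pow]
      calc (1/2 : ℝ) ^ (2*k) ≤ (1/2 : ℝ) ^ 0 := hpow (Nat.zero_le _)
      _ = 1 := pow_zero _
  · exact hy.trans (by norm_num)

lemma step (m : ℕ) (hm : 2 ≤ m) {y : ℚ_[2]} (h : Inv m y) : Inv m (gg m y) := by
  have h1le : ∀ j : ℕ, ((1/2 : ℝ) ^ j) ≤ 1 := fun j => by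
    calc (1/2 : ℝ) ^ j ≤ (1/2 : ℝ) ^ 0 := hpow (Nat.zero_le _)
    _ = 1 := pow_zero _
  have hy1 : ‖y‖ ≤ 1 := inv_norm_le_one m h
  rcases h with ⟨k, hk1, hkm, hd⟩ | hy
  · obtain ⟨k', rfl⟩ : ∃ k', k = k' + 1 := ⟨k - 1, by omega⟩
    have hdK : ‖y - cc m - 4 * 4 ^ k'‖ ≤ (1/2 : ℝ) ^ (2 * k' + 5) := by
      have e1 : (4 : ℚ_[2]) ^ (k' + 1) = 4 * 4 ^ k' := by rw [pow_succ]; ring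
      have e2 : 2 * (k' + 1) + 3 = 2 * k' + 5 := by ring
      rw [e1, e2] at hd; exact hd
    have hyc : ‖y - cc m‖ ≤ (1/2 : ℝ) ^ (2 * k' + 2) := by
      have : y - cc m = (y - cc m - 4 * 4 ^ k') + 4 * 4 ^ k' := by ring
      rw [this]
      refine nadd (hdK.trans (hpow (by omega))) ?_
      have : (4 : ℚ_[2]) * 4 ^ k' = 4 ^ (k' + 1) := by rw [pow_succ]; ring
      rw [this, norm_four_pow]
      exact le_of_eq (by ring_nf)
    rcases Nat.eq_zero_or_pos k' with hk0 | hk'pos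
    · -- exit case: k = 1, show ‖g y‖ ≤ (1/2)^3
      subst hk0
      right
      have hy3t : ‖y - 3 * tt m‖ ≤ (1/2 : ℝ) ^ 5 := by
        have hident : y - 3 * tt m = (y - cc m - 4 * 4 ^ 0) + 108 * PP m := by
          simp only [cc, tt]; ring
        rw [hident]
        refine nadd (hdK.trans (le_of_eq (by norm_num))) ?_
        have h108 : ‖(108 : ℚ_[2])‖ ≤ 1 := by exact_mod_cast nnat 108
        calc ‖(108:ℚ_[2]) * PP m‖ ≤ 1 * ((1/2:ℝ)^5) := nmul h108 (norm_PP_le m (by omega))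
        _ = (1/2:ℝ)^5 := one_mul _
      have hnum : ‖y ^ 2 * (y - 3 * tt m)‖ ≤ 1 * ((1/2 : ℝ) ^ 5) := by
        refine nmul ?_ hy3t
        rw [norm_pow]
        exact pow_le_one₀ (norm_nonneg y) hy1
      have := ndiv4 hnum
      show ‖y ^ 2 * (y - 3 * tt m) / 4‖ ≤ (1/2:ℝ)^3
      calc ‖y ^ 2 * (y - 3 * tt m) / 4‖ ≤ 4 * (1 * ((1/2:ℝ)^5)) := this
      _ = (1/2:ℝ)^3 := by norm_num
    · -- continuation case
      left
      refine ⟨k', hk'pos, by omega, ?_⟩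
      set K : ℚ_[2] := (4 : ℚ_[2]) ^ k' with hKdef
      have hK : ‖K‖ = (1/2 : ℝ) ^ (2 * k') := norm_four_pow k'
      have hident : gg m y - cc m - K =
          (cc m ^ 3 - 3 * tt m * cc m ^ 2 - 4 * cc m) / 4
          + (y - cc m - 4 * K) * ((3 * cc m ^ 2 - 6 * tt m * cc m) / 4)
          + K * (3 * cc m ^ 2 - 6 * tt m * cc m - 9)
          + 8 * K
          + (y - cc m) ^ 2 * ((3 * cc m - 3 * tt m) / 4)
          + (y - cc m) ^ 3 / 4 := by
        simp only [gg]; ring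
      rw [hident]
      have hb : (0:ℝ) ≤ 1 := by norm_num
      -- T1 : E/4
      have hE : cc m ^ 3 - 3 * tt m * cc m ^ 2 - 4 * cc m =
          2 ^ 6 * (9 * PP m) - 2 ^ 2 * (20007 * PP m ^ 2) + 1478412 * PP m ^ 3 := by
        simp only [cc, tt]; ring
      have hEn : ‖cc m ^ 3 - 3 * tt m * cc m ^ 2 - 4 * cc m‖ ≤ (1/2 : ℝ) ^ (2*m+7) := by
        rw [hE]
        have h2pow : ∀ j : ℕ, ‖(2:ℚ_[2]) ^ j‖ = (1/2:ℝ)^j := fun j => by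
          rw [norm_pow, norm_two]
        refine nadd (nsub ?_ ?_) ?_
        · have h9 : ‖(9 : ℚ_[2])‖ ≤ 1 := by exact_mod_cast nnat 9
          have : ‖(9:ℚ_[2]) * PP m‖ ≤ (1/2:ℝ)^(2*m+1) := by
            calc ‖(9:ℚ_[2]) * PP m‖ ≤ 1 * ((1/2:ℝ)^(2*m+1)) :=
              nmul h9 (norm_PP_le m (le_refl _))
            _ = _ := one_mul _
          calc ‖(2:ℚ_[2])^6 * (9 * PP m)‖ ≤ (1/2:ℝ)^6 * ((1/2:ℝ)^(2*m+1)) :=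
            nmul (le_of_eq (h2pow 6)) this
          _ = (1/2:ℝ)^(2*m+7) := by rw [← pow_add]; congr 1; omega
        · have h20007 : ‖(20007 : ℚ_[2])‖ ≤ 1 := by exact_mod_cast nnat 20007
          have hPP2 : ‖(20007:ℚ_[2]) * PP m ^ 2‖ ≤ (1/2:ℝ)^(4*m+2) := by
            have : ‖PP m ^ 2‖ = (1/2:ℝ)^(4*m+2) := by
              rw [norm_pow, norm_PP, ← pow_mul]; ring_nf
            calc ‖(20007:ℚ_[2]) * PP m ^ 2‖ ≤ 1 * ((1/2:ℝ)^(4*m+2)) :=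
              nmul h20007 (le_of_eq this)
            _ = _ := one_mul _
          calc ‖(2:ℚ_[2])^2 * ((20007:ℚ_[2]) * PP m ^ 2)‖
              ≤ (1/2:ℝ)^2 * ((1/2:ℝ)^(4*m+2)) := nmul (le_of_eq (h2pow 2)) hPP2
          _ = (1/2:ℝ)^(4*m+4) := by rw [← pow_add]; congr 1; omega
          _ ≤ (1/2:ℝ)^(2*m+7) := hpow (by omega)
        · have h14 : ‖(1478412 : ℚ_[2])‖ ≤ 1 := by exact_mod_cast nnat 1478412
          have : ‖PP m ^ 3‖ = (1/2:ℝ)^(6*m+3) := by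
            rw [norm_pow, norm_PP, ← pow_mul]; ring_nf
          calc ‖(1478412:ℚ_[2]) * PP m ^ 3‖ ≤ 1 * ((1/2:ℝ)^(6*m+3)) :=
            nmul h14 (le_of_eq this)
          _ = (1/2:ℝ)^(6*m+3) := one_mul _
          _ ≤ (1/2:ℝ)^(2*m+7) := hpow (by omega)
      have hT1 : ‖(cc m ^ 3 - 3 * tt m * cc m ^ 2 - 4 * cc m) / 4‖ ≤ (1/2:ℝ)^(2*k'+3) := by
        have := ndiv4 hEn
        calc ‖(cc m ^ 3 - 3 * tt m * cc m ^ 2 - 4 * cc m) / 4‖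
            ≤ 4 * (1/2:ℝ)^(2*m+7) := this
        _ = (1/2:ℝ)^(2*m+5) := by
            rw [show 2*m+7 = (2*m+5)+2 by ring, pow_add]; ring
        _ ≤ (1/2:ℝ)^(2*k'+3) := hpow (by omega)
      -- 4Q - 9 bound
      have hQ9 : ‖3 * cc m ^ 2 - 6 * tt m * cc m - 9‖ ≤ (1/2:ℝ)^5 := by
        have hident2 : 3 * cc m ^ 2 - 6 * tt m * cc m - 9 =
            (-1386 : ℚ_[2]) * PP m + 38961 * PP m ^ 2 := by
          simp only [cc, tt]; ring
        rw [hident2]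
        refine nadd ?_ ?_
        · have h1386 : ‖(-1386 : ℚ_[2])‖ ≤ 1 := by
            rw [show ((-1386 : ℚ_[2])) = ((-1386 : ℤ) : ℚ_[2]) by norm_num]
            exact Padic.norm_int_le_one _
          calc ‖(-1386:ℚ_[2]) * PP m‖ ≤ 1 * ((1/2:ℝ)^5) :=
            nmul h1386 (norm_PP_le m (by omega))
          _ = _ := one_mul _
        · have h38961 : ‖(38961 : ℚ_[2])‖ ≤ 1 := by exact_mod_cast nnat 38961
          have := norm_lit_PP (m := m) (38961 : ℚ_[2]) h38961 (j := 2) (by omega)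
          exact this.trans (hpow (by omega))
      -- 4Q bound : ‖3c² - 6tc‖ ≤ 1
      have hQ : ‖3 * cc m ^ 2 - 6 * tt m * cc m‖ ≤ 1 := by
        have : 3 * cc m ^ 2 - 6 * tt m * cc m =
            (3 * cc m ^ 2 - 6 * tt m * cc m - 9) + 9 := by ring
        rw [this]
        refine nadd (hQ9.trans (h1le 5)) ?_
        exact_mod_cast nnat 9
      -- T2
      have hT2 : ‖(y - cc m - 4 * K) * ((3 * cc m ^ 2 - 6 * tt m * cc m) / 4)‖
          ≤ (1/2:ℝ)^(2*k'+3) := by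
        have hQ4 : ‖(3 * cc m ^ 2 - 6 * tt m * cc m) / 4‖ ≤ 4 * 1 := ndiv4 hQ
        calc ‖(y - cc m - 4 * K) * ((3 * cc m ^ 2 - 6 * tt m * cc m) / 4)‖
            ≤ (1/2:ℝ)^(2*k'+5) * (4 * 1) := nmul hdK hQ4
        _ = (1/2:ℝ)^(2*k'+3) := by
            rw [show 2*k'+5 = (2*k'+3)+2 by ring, pow_add]; ring
      -- T3
      have hT3 : ‖K * (3 * cc m ^ 2 - 6 * tt m * cc m - 9)‖ ≤ (1/2:ℝ)^(2*k'+3) := by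
        calc ‖K * (3 * cc m ^ 2 - 6 * tt m * cc m - 9)‖
            ≤ (1/2:ℝ)^(2*k') * ((1/2:ℝ)^5) := nmul (le_of_eq hK) hQ9
        _ = (1/2:ℝ)^(2*k'+5) := by rw [← pow_add]
        _ ≤ (1/2:ℝ)^(2*k'+3) := hpow (by omega)
      -- T4
      have hT4 : ‖(8:ℚ_[2]) * K‖ ≤ (1/2:ℝ)^(2*k'+3) := by
        have h8 : ‖(8:ℚ_[2])‖ = (1/2:ℝ)^3 := by
          rw [show (8:ℚ_[2]) = 2^3 by norm_num, norm_pow, norm_two]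
        calc ‖(8:ℚ_[2]) * K‖ ≤ (1/2:ℝ)^3 * ((1/2:ℝ)^(2*k')) :=
          nmul (le_of_eq h8) (le_of_eq hK)
        _ = (1/2:ℝ)^(2*k'+3) := by rw [← pow_add]; ring_nf
      -- T5
      have hT5 : ‖(y - cc m) ^ 2 * ((3 * cc m - 3 * tt m) / 4)‖ ≤ (1/2:ℝ)^(2*k'+3) := by
        have hR : ‖3 * cc m - 3 * tt m‖ ≤ (1/2:ℝ)^1 := by
          have hident3 : 3 * cc m - 3 * tt m = (-6 : ℚ_[2]) + 342 * PP m := by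
            simp only [cc, tt]; ring
          rw [hident3]
          refine nadd ?_ ?_
          · have : (-6 : ℚ_[2]) = 2 * (-3) := by norm_num
            rw [this]
            have h3 : ‖(-3:ℚ_[2])‖ ≤ 1 := by
              rw [show ((-3 : ℚ_[2])) = ((-3 : ℤ) : ℚ_[2]) by norm_num]
              exact Padic.norm_int_le_one _
            calc ‖(2:ℚ_[2]) * (-3)‖ ≤ (1/2:ℝ) * 1 := nmul (le_of_eq norm_two) h3
            _ = (1/2:ℝ)^1 := by norm_num
          · have h342 : ‖(342 : ℚ_[2])‖ ≤ 1 := by exact_mod_cast nnat 342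
            calc ‖(342:ℚ_[2]) * PP m‖ ≤ 1 * ((1/2:ℝ)^(2*m+1)) :=
              nmul h342 (norm_PP_le m (le_refl _))
            _ = (1/2:ℝ)^(2*m+1) := one_mul _
            _ ≤ (1/2:ℝ)^1 := hpow (by omega)
        have hR4 : ‖(3 * cc m - 3 * tt m) / 4‖ ≤ 4 * ((1/2:ℝ)^1) := ndiv4 hR
        have hyc2 : ‖(y - cc m) ^ 2‖ ≤ (1/2:ℝ)^(4*k'+4) := by
          rw [norm_pow, show 4*k'+4 = (2*k'+2)*2 by ring, pow_mul]
          exact pow_le_pow_left₀ (norm_nonneg _) hyc 2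
        calc ‖(y - cc m) ^ 2 * ((3 * cc m - 3 * tt m) / 4)‖
            ≤ (1/2:ℝ)^(4*k'+4) * (4 * ((1/2:ℝ)^1)) := nmul hyc2 hR4
        _ = (1/2:ℝ)^(4*k'+3) := by
            rw [show 4*k'+4 = (4*k'+3)+1 by ring, pow_add]; ring
        _ ≤ (1/2:ℝ)^(2*k'+3) := hpow (by omega)
      -- T6
      have hT6 : ‖(y - cc m) ^ 3 / 4‖ ≤ (1/2:ℝ)^(2*k'+3) := by
        have hyc3 : ‖(y - cc m) ^ 3‖ ≤ (1/2:ℝ)^(6*k'+6) := by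
          rw [norm_pow, show 6*k'+6 = (2*k'+2)*3 by ring, pow_mul]
          exact pow_le_pow_left₀ (norm_nonneg _) hyc 3
        have := ndiv4 hyc3
        calc ‖(y - cc m) ^ 3 / 4‖ ≤ 4 * (1/2:ℝ)^(6*k'+6) := this
        _ = (1/2:ℝ)^(6*k'+4) := by
            rw [show 6*k'+6 = (6*k'+4)+2 by ring, pow_add]; ring
        _ ≤ (1/2:ℝ)^(2*k'+3) := hpow (by omega)
      exact nadd (nadd (nadd (nadd (nadd hT1 hT2) hT3) hT4) hT5) hT6
  · -- small region
    right
    have hy3t : ‖y - 3 * tt m‖ ≤ 1 := nsub (hy.trans (h1le 3)) (norm_tt_le_one m)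
    have hnum : ‖y ^ 2 * (y - 3 * tt m)‖ ≤ (1/2:ℝ)^6 * 1 := by
      refine nmul ?_ hy3t
      rw [norm_pow]
      calc ‖y‖^2 ≤ ((1/2:ℝ)^3)^2 := pow_le_pow_left₀ (norm_nonneg _) hy 2
      _ = (1/2:ℝ)^6 := by norm_num
    have := ndiv4 hnum
    show ‖y ^ 2 * (y - 3 * tt m) / 4‖ ≤ (1/2:ℝ)^3
    calc ‖y ^ 2 * (y - 3 * tt m) / 4‖ ≤ 4 * ((1/2:ℝ)^6 * 1) := this
    _ = (1/2:ℝ)^4 := by norm_num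
    _ ≤ (1/2:ℝ)^3 := hpow (by omega)

lemma init (m : ℕ) (hm : 2 ≤ m) : Inv m (gg m (2 * tt m)) := by
  left
  refine ⟨m + 1, by omega, le_refl _, ?_⟩
  have h4m : (4 : ℚ_[2]) ^ (m + 1) = 2 * PP m := by
    rw [show (4:ℚ_[2]) = 2^2 by norm_num, ← pow_mul, PP,
      show 2*(m+1) = (2*m+1)+1 by ring, pow_succ]
    ring
  have hident : gg m (2 * tt m) - cc m - 2 * PP m =
      -(2 ^ 7 * PP m) - 27 * PP m ^ 2 - 27 * PP m ^ 3 := by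
    simp only [gg, tt, cc]; ring
  rw [h4m, hident]
  have e2 : 2 * (m + 1) + 3 = 2*m+5 := by ring
  rw [e2]
  refine nsub (nsub ?_ ?_) ?_
  · rw [norm_neg]
    have h2pow : ‖(2:ℚ_[2])^7‖ = (1/2:ℝ)^7 := by rw [norm_pow, norm_two]
    calc ‖(2:ℚ_[2])^7 * PP m‖ ≤ (1/2:ℝ)^7 * ((1/2:ℝ)^(2*m+1)) :=
      nmul (le_of_eq h2pow) (norm_PP_le m (le_refl _))
    _ = (1/2:ℝ)^(2*m+8) := by rw [← pow_add]; ring_nf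
    _ ≤ (1/2:ℝ)^(2*m+5) := hpow (by omega)
  · have h27 : ‖(27 : ℚ_[2])‖ ≤ 1 := by exact_mod_cast nnat 27
    have : ‖PP m ^ 2‖ = (1/2:ℝ)^(4*m+2) := by
      rw [norm_pow, norm_PP, ← pow_mul]; ring_nf
    calc ‖(27:ℚ_[2]) * PP m ^ 2‖ ≤ 1 * ((1/2:ℝ)^(4*m+2)) := nmul h27 (le_of_eq this)
    _ = (1/2:ℝ)^(4*m+2) := one_mul _
    _ ≤ (1/2:ℝ)^(2*m+5) := hpow (by omega)
  · have h27 : ‖(27 : ℚ_[2])‖ ≤ 1 := by exact_mod_cast nnat 27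
    have : ‖PP m ^ 3‖ = (1/2:ℝ)^(6*m+3) := by
      rw [norm_pow, norm_PP, ← pow_mul]; ring_nf
    calc ‖(27:ℚ_[2]) * PP m ^ 3‖ ≤ 1 * ((1/2:ℝ)^(6*m+3)) := nmul h27 (le_of_eq this)
    _ = (1/2:ℝ)^(6*m+3) := one_mul _
    _ ≤ (1/2:ℝ)^(2*m+5) := hpow (by omega)

lemma orbit_le_one (m : ℕ) (hm : 2 ≤ m) (n : ℕ) : ‖(gg m)^[n] (2 * tt m)‖ ≤ 1 := by
  cases n with
  | zero =>
    simp only [Function.iterate_zero, id]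
    have : (2:ℚ_[2]) * tt m = 2 + 6 * PP m := by rw [tt]; ring
    rw [this]
    refine nadd ?_ ?_
    · rw [norm_two]; norm_num
    · have h6 : ‖(6 : ℚ_[2])‖ ≤ 1 := by exact_mod_cast nnat 6
      calc ‖(6:ℚ_[2]) * PP m‖ ≤ 1 * 1 := nmul h6 (norm_PP_le_one m)
      _ = 1 := by norm_num
  | succ n =>
    have hInv : ∀ j : ℕ, Inv m ((gg m)^[j+1] (2 * tt m)) := by
      intro j
      induction j with
      | zero => simpa using init m hm
      | succ j ih =>
        rw [show j+1+1 = (j+1)+1 from rfl, Function.iterate_succ_apply']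
        exact step m hm ih
    exact inv_norm_le_one m (hInv n)

end Stmt12Aux

/-- For each integer `m ≥ 2`, let `t = 1 + 3·2^(2m+1) ∈ ℚ₂` and
`f_t(z) = z³ - (3/2) t z²`. Then the forward orbit of `t` under `f_t` is bounded;
in particular `f_t` is post-critically bounded. -/
theorem stmt_12 (m : ℕ) (hm : 2 ≤ m) :
    ∃ B : ℝ, ∀ n : ℕ,
      ‖(fun z : ℚ_[2] =>
          z ^ 3 - (3 / 2 : ℚ_[2]) * (1 + 3 * 2 ^ (2 * m + 1)) * z ^ 2)^[n]
        ((1 : ℚ_[2]) + 3 * 2 ^ (2 * m + 1))‖ ≤ B := by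
  refine ⟨2, fun n => ?_⟩
  set f : ℚ_[2] → ℚ_[2] := fun z =>
    z ^ 3 - (3 / 2 : ℚ_[2]) * (1 + 3 * 2 ^ (2 * m + 1)) * z ^ 2 with hf
  have htt : Stmt12Aux.tt m = (1 : ℚ_[2]) + 3 * 2 ^ (2 * m + 1) := rfl
  have hg2 : ∀ z : ℚ_[2], Stmt12Aux.gg m (2 * z) = 2 * f z := by
    intro z
    simp only [Stmt12Aux.gg, Stmt12Aux.tt, Stmt12Aux.PP, hf]
    ring
  have hconj : ∀ (n : ℕ) (z : ℚ_[2]),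
      (Stmt12Aux.gg m)^[n] (2 * z) = 2 * f^[n] z := by
    intro n
    induction n with
    | zero => intro z; simp
    | succ n ih =>
      intro z
      rw [Function.iterate_succ_apply, Function.iterate_succ_apply, hg2]
      exact ih _
  have h1 := Stmt12Aux.orbit_le_one m hm n
  rw [htt, hconj n ((1 : ℚ_[2]) + 3 * 2 ^ (2 * m + 1))] at h1
  rw [norm_mul, Stmt12Aux.norm_two] at h1
  linarith [norm_nonneg (f^[n] ((1 : ℚ_[2]) + 3 * 2 ^ (2 * m + 1)))]
end

section
/- Let k ≥ 2 be an integer and let t ∈ K satisfy |t − (1 + 2^{2k})| ≤ 2^{−(2k+1)} (i.e. t ≡ 1 + 2^{2k} mod 2^{2k+1}). Then the forward orbit of t under f_t(z) = z³ − (3/2) t z² is unbounded; in particular f_t is not post-critically bounded. -/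
section
variable {K : Type*} [NormedField K]

lemma na_add_eq (hna : IsNonarchimedean (fun x : K => ‖x‖)) {x y : K}
    (h : ‖y‖ < ‖x‖) : ‖x + y‖ = ‖x‖ := by
  refine le_antisymm ((hna x y).trans (max_le le_rfl h.le)) ?_
  have h2 : ‖x‖ ≤ max ‖x + y‖ ‖y‖ := by
    have := hna (x + y) (-y); simpa using this
  rcases max_cases ‖x + y‖ ‖y‖ with ⟨he, _⟩ | ⟨he, _⟩
  · rw [he] at h2; exact h2
  · rw [he] at h2; exact absurd h2 (not_le.2 h)

lemma na_le (hna : IsNonarchimedean (fun x : K => ‖x‖)) {x y : K} {c : ℝ}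
    (h1 : ‖x‖ ≤ c) (h2 : ‖y‖ ≤ c) : ‖x + y‖ ≤ c :=
  (hna x y).trans (max_le h1 h2)

variable (hext : ∀ q : ℚ, ‖(q : K)‖ = (padicNorm 2 q : ℝ))
include hext

lemma norm_two' : ‖(2 : K)‖ = (2:ℝ)^(-1 : ℤ) := by
  have := hext 2
  push_cast at this
  rw [this, show ((2:ℚ)) = ((2:ℕ):ℚ) by norm_num,
    padicNorm.padicNorm_p (p := 2) (by norm_num)]
  norm_num

lemma norm_int_le (n : ℤ) : ‖((n : ℚ) : K)‖ ≤ 1 := by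
  rw [hext]
  exact_mod_cast padicNorm.of_int (p := 2) n

lemma norm_odd (n : ℤ) (h : ¬ (2:ℤ) ∣ n) : ‖((n : ℚ) : K)‖ = 1 := by
  rw [hext]
  rw [(padicNorm.int_eq_one_iff (p := 2) n).2 (by exact_mod_cast h)]
  norm_num

lemma norm_two_ne : (2 : K) ≠ 0 := by
  intro h
  have := norm_two' hext
  rw [h, norm_zero] at this
  exact absurd this.symm (ne_of_gt (zpow_pos two_pos _))

end

lemma zp (a b : ℤ) : (2:ℝ)^a * (2:ℝ)^b = 2^(a+b) := (zpow_add₀ two_ne_zero a b).symm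
lemma zpsq (a : ℤ) (n : ℕ) : ((2:ℝ)^a)^n = 2^(a*n) := by
  rw [← zpow_natCast ((2:ℝ)^a) n, ← zpow_mul]
lemma zple {a b : ℤ} (h : a ≤ b) : (2:ℝ)^a ≤ 2^b := zpow_le_zpow_right₀ one_le_two h
lemma zplt {a b : ℤ} (h : a < b) : (2:ℝ)^a < 2^b := zpow_lt_zpow_right₀ one_lt_two h

section
variable {K : Type*} [NormedField K]
  (hna : IsNonarchimedean (fun x : K => ‖x‖))
  (hext : ∀ q : ℚ, ‖(q : K)‖ = (padicNorm 2 q : ℝ))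
include hna hext

lemma step_lem (k : ℕ) (t z : K) (μ : ℤ) (hμ1 : 1 ≤ μ) (hμ2 : μ ≤ 2*(k:ℤ)-1)
    (hs : ‖t - 1‖ = (2:ℝ)^(-(2*(k:ℤ))))
    (ha : ‖-2*z - 1‖ = (2:ℝ)^(-μ)) :
    ‖-2*(z^3 - (3/2 : K)*t*z^2) - 1‖ = (2:ℝ)^(2-μ) := by
  have h2 : (2:K) ≠ 0 := norm_two_ne hext
  have h3 : ‖((3:ℚ):K)‖ = 1 := norm_odd hext 3 (by norm_num)
  have h9 : ‖((9:ℚ):K)‖ = 1 := norm_odd hext 9 (by norm_num)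
  have key : -2*(z^3 - (3/2 : K)*t*z^2) - 1
      = (2:K)⁻¹^2 * (((9:ℚ):K)*(-2*z-1) + ((((3:ℚ):K))*(t-1) +
        (2*((3:ℚ):K)*(-2*z-1)^2 + ((-2*z-1)^3 +
        (2*((3:ℚ):K)*(-2*z-1)*(t-1) + ((3:ℚ):K)*(-2*z-1)^2*(t-1)))))) := by
    push_cast
    field_simp
    ring
  rw [key, norm_mul, norm_pow, norm_inv, norm_two' hext]
  -- norms of each term
  have hterm1 : ‖((9:ℚ):K)*(-2*z-1)‖ = (2:ℝ)^(-μ) := by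
    rw [norm_mul, h9, ha, one_mul]
  have hrest : ‖(((3:ℚ):K))*(t-1) +
      (2*((3:ℚ):K)*(-2*z-1)^2 + ((-2*z-1)^3 +
      (2*((3:ℚ):K)*(-2*z-1)*(t-1) + ((3:ℚ):K)*(-2*z-1)^2*(t-1))))‖ ≤ (2:ℝ)^(-(μ+1)) := by
    refine na_le hna ?_ (na_le hna ?_ (na_le hna ?_ (na_le hna ?_ ?_)))
    · rw [norm_mul, h3, hs, one_mul]
      exact zple (by omega)
    · rw [norm_mul, norm_mul, norm_two' hext, h3, norm_pow, ha, mul_one, zpsq, zp]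
      exact zple (by omega)
    · rw [norm_pow, ha, zpsq]
      exact zple (by omega)
    · rw [norm_mul, norm_mul, norm_mul, norm_two' hext, h3, ha, hs, mul_one, zp, zp]
      exact zple (by omega)
    · rw [norm_mul, norm_mul, h3, norm_pow, ha, hs, one_mul, zpsq, zp]
      exact zple (by omega)
  rw [na_add_eq hna (lt_of_le_of_lt hrest (by rw [hterm1]; exact zplt (by omega))), hterm1,
    ← zpow_neg, zpsq, zp]
  norm_num
  omega

end

section
variable {K : Type*} [NormedField K]
  (hna : IsNonarchimedean (fun x : K => ‖x‖))
  (hext : ∀ q : ℚ, ‖(q : K)‖ = (padicNorm 2 q : ℝ))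
include hna hext

lemma base_lem (k : ℕ) (hk : 2 ≤ k) (t : K)
    (hs : ‖t - 1‖ = (2:ℝ)^(-(2*(k:ℤ)))) :
    ‖-2*((t^3 - (3/2 : K)*t*t^2)^3 - (3/2 : K)*t*(t^3 - (3/2 : K)*t*t^2)^2) - 1‖
      = (2:ℝ)^(-(2*(k:ℤ)-1)) := by
  have h2 : (2:K) ≠ 0 := norm_two_ne hext
  have h15 : ‖((15:ℚ):K)‖ = 1 := norm_odd hext 15 (by norm_num)
  have hs1 : ‖t - 1‖ ≤ 1 := by
    rw [hs]
    have : (2:ℝ)^(-(2*(k:ℤ))) ≤ 2^(0:ℤ) := zple (by omega)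
    simpa using this
  have key : -2*((t^3 - (3/2 : K)*t*t^2)^3 - (3/2 : K)*t*(t^3 - (3/2 : K)*t*t^2)^2) - 1
      = (2:K)⁻¹^2 * (2*((15:ℚ):K)*(t-1) + (t-1)^2*(((99:ℚ):K) + (((189:ℚ):K)*(t-1)^1 +
        (((231:ℚ):K)*(t-1)^2 + (((189:ℚ):K)*(t-1)^3 + (((105:ℚ):K)*(t-1)^4 +
        (((39:ℚ):K)*(t-1)^5 + (((9:ℚ):K)*(t-1)^6 + (t-1)^7)))))))) := by
    push_cast
    field_simp
    ring
  rw [key, norm_mul, norm_pow, norm_inv, norm_two' hext]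
  have hmain : ‖(2:K)*((15:ℚ):K)*(t-1)‖ = (2:ℝ)^(-(2*(k:ℤ)+1)) := by
    rw [norm_mul, norm_mul, norm_two' hext, h15, hs, mul_one, zp]
    ring_nf
  have hQ : ‖(((99:ℚ):K) + (((189:ℚ):K)*(t-1)^1 +
        (((231:ℚ):K)*(t-1)^2 + (((189:ℚ):K)*(t-1)^3 + (((105:ℚ):K)*(t-1)^4 +
        (((39:ℚ):K)*(t-1)^5 + (((9:ℚ):K)*(t-1)^6 + (t-1)^7)))))))‖ ≤ 1 := by
    have hp : ∀ m : ℕ, ‖(t-1)^m‖ ≤ 1 := fun m => by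
      rw [norm_pow]; exact pow_le_one₀ (norm_nonneg _) hs1
    have hc : ∀ (q : ℚ) (m : ℕ), ‖(q:K)‖ ≤ 1 → ‖(q:K)*(t-1)^m‖ ≤ 1 := fun q m hq => by
      rw [norm_mul]
      exact mul_le_one₀ hq (norm_nonneg _) (hp m)
    have hb : ∀ n : ℤ, ‖((n:ℚ):K)‖ ≤ 1 := norm_int_le hext
    refine na_le hna (by exact_mod_cast hb 99)
      (na_le hna (hc 189 1 (by exact_mod_cast hb 189)) (na_le hna (hc 231 2 (by exact_mod_cast hb 231))
      (na_le hna (hc 189 3 (by exact_mod_cast hb 189)) (na_le hna (hc 105 4 (by exact_mod_cast hb 105))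
      (na_le hna (hc 39 5 (by exact_mod_cast hb 39))
      (na_le hna (hc 9 6 (by exact_mod_cast hb 9)) (hp 7)))))))
  have hsmall : ‖(t-1)^2*(((99:ℚ):K) + (((189:ℚ):K)*(t-1)^1 +
        (((231:ℚ):K)*(t-1)^2 + (((189:ℚ):K)*(t-1)^3 + (((105:ℚ):K)*(t-1)^4 +
        (((39:ℚ):K)*(t-1)^5 + (((9:ℚ):K)*(t-1)^6 + (t-1)^7)))))))‖
        < (2:ℝ)^(-(2*(k:ℤ)+1)) := by
    rw [norm_mul, norm_pow, hs, zpsq]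
    calc ((2:ℝ)^(-(2*(k:ℤ))*2)) * ‖_‖ ≤ (2:ℝ)^(-(2*(k:ℤ))*2) * 1 := by
          exact mul_le_mul_of_nonneg_left hQ (le_of_lt (zpow_pos two_pos _))
      _ = (2:ℝ)^(-(2*(k:ℤ))*2) := mul_one _
      _ < (2:ℝ)^(-(2*(k:ℤ)+1)) := zplt (by omega)
  rw [na_add_eq hna (by rw [hmain]; exact hsmall), hmain, ← zpow_neg, zpsq, zp]
  congr 1
  omega

end


/-- Let `k ≥ 2` and `t ∈ K` with `|t - (1 + 2^(2k))| ≤ 2^(-(2k+1))`.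
Then the forward orbit of `t` under `f_t(z) = z³ - (3/2) t z²` is unbounded; in
particular `f_t` is not post-critically bounded. -/
theorem stmt_13 (K : Type*) [NormedField K] [IsAlgClosed K] [CompleteSpace K]
    (hna : IsNonarchimedean (fun x : K => ‖x‖))
    (hext : ∀ q : ℚ, ‖(q : K)‖ = (padicNorm 2 q : ℝ))
    (k : ℕ) (hk : 2 ≤ k)
    (t : K) (ht : ‖t - (1 + 2 ^ (2 * k))‖ ≤ (2 : ℝ) ^ (-(2 * (k : ℤ) + 1))) :
    ¬ ∃ B : ℝ, ∀ n : ℕ,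
      ‖(fun z : K => z ^ 3 - (3 / 2 : K) * t * z ^ 2)^[n] t‖ ≤ B := by
  set f : K → K := fun z : K => z ^ 3 - (3 / 2 : K) * t * z ^ 2 with hf
  have h2n : ‖(2:K)‖ = (2:ℝ)^(-1:ℤ) := norm_two' hext
  have hs : ‖t - 1‖ = (2:ℝ)^(-(2*(k:ℤ))) := by
    have e : t - 1 = (2:K)^(2*k) + (t - (1 + 2^(2*k))) := by ring
    have hlt : ‖t - (1 + 2^(2*k) : K)‖ < ‖(2:K)^(2*k)‖ := by
      rw [norm_pow, h2n, zpsq]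
      exact lt_of_le_of_lt ht (zplt (by push_cast; omega))
    rw [e, na_add_eq hna hlt, norm_pow, h2n, zpsq]
    congr 1
    push_cast
    ring
  have ht1 : ‖t‖ = 1 := by
    have e : t = 1 + (t-1) := by ring
    have hlt : ‖t - 1‖ < ‖(1:K)‖ := by
      rw [hs, norm_one]
      have := zplt (show -(2*(k:ℤ)) < 0 by omega)
      simpa using this
    rw [e, na_add_eq hna hlt, norm_one]
  -- base case: n = 2
  have hb : ‖-2*(f^[2] t) - 1‖ = (2:ℝ)^(-(2*(k:ℤ)-1)) := by
    have e2 : f^[2] t = (t^3 - (3/2 : K)*t*t^2)^3 - (3/2 : K)*t*(t^3 - (3/2 : K)*t*t^2)^2 := by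
      simp [hf, Function.iterate_succ_apply']
    rw [e2]
    exact base_lem hna hext k hk t hs
  -- main induction during the bounded phase
  have main : ∀ j : ℕ, j + 1 ≤ k → ‖-2*(f^[j+2] t) - 1‖ = (2:ℝ)^(-(2*(k:ℤ)-1-2*(j:ℤ))) := by
    intro j
    induction j with
    | zero => intro _; simpa using hb
    | succ j ih =>
      intro hj
      have h1 := ih (by omega)
      have e : f^[j+1+2] t = f (f^[j+2] t) := by
        rw [show j+1+2 = (j+2)+1 by ring, Function.iterate_succ_apply']
      rw [e]
      have hstep := step_lem hna hext k t (f^[j+2] t) (2*(k:ℤ)-1-2*(j:ℤ))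
        (by omega) (by omega) hs h1
      have hexp : (-(2*(k:ℤ)-1-2*(((j+1:ℕ)):ℤ))) = 2-(2*(k:ℤ)-1-2*(j:ℤ)) := by
        push_cast; ring
      rw [hexp]
      exact hstep
  -- reach norm 2 at step k+1, then escape at k+2
  have hk1 : ‖-2*(f^[k+1] t) - 1‖ = (2:ℝ)^(-1:ℤ) := by
    have := main (k-2+1) (by omega)
    rw [show k-2+1+2 = k+1 by omega] at this
    rw [this]
    congr 1
    have : ((k-2+1:ℕ):ℤ) = (k:ℤ) - 1 := by omega
    rw [this]; ring
  have hk2 : ‖-2*(f^[k+2] t) - 1‖ = (2:ℝ)^(1:ℤ) := by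
    have e : f^[k+2] t = f (f^[k+1] t) := by
      rw [show k+2 = (k+1)+1 by ring, Function.iterate_succ_apply']
    rw [e]
    have := step_lem hna hext k t (f^[k+1] t) 1 le_rfl (by omega) hs hk1
    simpa using this
  have hz4 : ‖f^[k+2] t‖ = 4 := by
    have e : -2*(f^[k+2] t) = (-2*(f^[k+2] t) - 1) + 1 := by ring
    have hn2 : ‖-2*(f^[k+2] t)‖ = 2 := by
      rw [e, na_add_eq hna (by rw [hk2, norm_one]; norm_num), hk2]
      norm_num
    have : ‖(-2:K)‖ * ‖f^[k+2] t‖ = 2 := by rw [← norm_mul]; exact hn2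
    rw [show ((-2:K)) = -(2:K) by ring, norm_neg, h2n] at this
    have h12 : (2:ℝ)^(-1:ℤ) = 1/2 := by norm_num
    rw [h12] at this
    linarith
  -- escape phase
  have h32 : ‖(3/2 : K)*t‖ = 2 := by
    have h3 : ‖((3:ℚ):K)‖ = 1 := norm_odd hext 3 (by norm_num)
    have e : ((3/2 : K)) = ((3:ℚ):K) / 2 := by push_cast; ring
    rw [norm_mul, e, norm_div, h3, h2n, ht1]
    norm_num
  have grow : ∀ z : K, (4:ℝ) ≤ ‖z‖ → ‖f z‖ = ‖z‖^3 := by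
    intro z hz
    have e : f z = z^3 + (-((3/2 : K)*t*z^2)) := by simp [hf]; ring
    have hlt : ‖-((3/2 : K)*t*z^2)‖ < ‖z^3‖ := by
      rw [norm_neg, norm_mul, h32, norm_pow, norm_pow]
      nlinarith [norm_nonneg z]
    rw [e, na_add_eq hna hlt, norm_pow]
  have esc : ∀ j : ℕ, (4:ℝ)^(j+1) ≤ ‖f^[k+2+j] t‖ := by
    intro j
    induction j with
    | zero => rw [pow_one]; exact le_of_eq hz4.symm
    | succ j ih =>
      have e : f^[k+2+(j+1)] t = f (f^[k+2+j] t) := by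
        rw [show k+2+(j+1) = (k+2+j)+1 by ring, Function.iterate_succ_apply']
      have h4 : (4:ℝ) ≤ ‖f^[k+2+j] t‖ :=
        le_trans (by calc (4:ℝ) = 4^1 := (pow_one 4).symm
                        _ ≤ 4^(j+1) := pow_le_pow_right₀ (by norm_num) (by omega)) ih
      rw [e, grow _ h4]
      calc (4:ℝ)^(j+1+1) ≤ 4^((j+1)*3) := pow_le_pow_right₀ (by norm_num) (by omega)
        _ = ((4:ℝ)^(j+1))^3 := by rw [← pow_mul]
        _ ≤ ‖f^[k+2+j] t‖^3 := by
            exact pow_le_pow_left₀ (by norm_num) ih 3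
  rintro ⟨B, hB⟩
  obtain ⟨j, hj⟩ := pow_unbounded_of_one_lt B (by norm_num : (1:ℝ) < 4)
  have h1 : B < (4:ℝ)^(j+1) :=
    lt_of_lt_of_le hj (pow_le_pow_right₀ (by norm_num) (by omega))
  exact absurd (hB (k+2+j)) (not_le.2 (lt_of_lt_of_le h1 (esc j)))
end

section
/- Let m ≥ 2 be an integer and let t ∈ K satisfy |t − (1 + 3·2^{2m+1})| ≤ 2^{−(2m+3)} (i.e. t ≡ 1 + 3·2^{2m+1} mod 2^{2m+3}). Then the forward orbit of t under f_t(z) = z³ − (3/2) t z² is bounded; in particular f_t is post-critically bounded. -/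
private lemma nadd {K : Type*} [NormedField K]
    (hna : IsNonarchimedean (fun x : K => ‖x‖)) {x y : K} {c : ℝ}
    (hx : ‖x‖ ≤ c) (hy : ‖y‖ ≤ c) : ‖x + y‖ ≤ c :=
  (hna x y).trans (max_le hx hy)

private lemma nsub {K : Type*} [NormedField K]
    (hna : IsNonarchimedean (fun x : K => ‖x‖)) {x y : K} {c : ℝ}
    (hx : ‖x‖ ≤ c) (hy : ‖y‖ ≤ c) : ‖x - y‖ ≤ c := by
  rw [sub_eq_add_neg]
  exact nadd hna hx (by rwa [norm_neg])

private lemma nmul {K : Type*} [NormedField K] {x y : K} {a b : ℝ}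
    (hx : ‖x‖ ≤ a) (hy : ‖y‖ ≤ b) : ‖x * y‖ ≤ a * b := by
  rw [norm_mul]
  exact mul_le_mul hx hy (norm_nonneg _) ((norm_nonneg x).trans hx)

/-- Let `m ≥ 2` and `t ∈ K` with
`|t - (1 + 3·2^(2m+1))| ≤ 2^(-(2m+3))`. Then the forward orbit of `t` under
`f_t(z) = z³ - (3/2) t z²` is bounded; in particular `f_t` is post-critically
bounded. -/
theorem stmt_14 (K : Type*) [NormedField K] [IsAlgClosed K] [CompleteSpace K]
    (hna : IsNonarchimedean (fun x : K => ‖x‖))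
    (hext : ∀ q : ℚ, ‖(q : K)‖ = (padicNorm 2 q : ℝ))
    (m : ℕ) (hm : 2 ≤ m)
    (t : K) (ht : ‖t - (1 + 3 * 2 ^ (2 * m + 1))‖ ≤ (2 : ℝ) ^ (-(2 * (m : ℤ) + 3))) :
    ∃ B : ℝ, ∀ n : ℕ,
      ‖(fun z : K => z ^ 3 - (3 / 2 : K) * t * z ^ 2)^[n] t‖ ≤ B := by
  -- ### `K` has characteristic zero
  haveI hCZ : CharZero K := by
    refine ⟨fun a b hab => ?_⟩
    by_contra hne
    have hden : ∀ n : ℕ, (((n : ℚ).den : K)) ≠ 0 := by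
      intro n; rw [Rat.den_natCast]; simp
    have h1 : (((a : ℚ) - (b : ℚ) : ℚ) : K) = (a : K) - (b : K) := by
      rw [Rat.cast_sub_of_ne_zero (hden a) (hden b), Rat.cast_natCast, Rat.cast_natCast]
    have h0 : ‖(((a : ℚ) - (b : ℚ) : ℚ) : K)‖ = 0 := by
      rw [h1, hab, sub_self, norm_zero]
    rw [hext] at h0
    have hq0 : ((a : ℚ) - (b : ℚ)) = 0 :=
      padicNorm.zero_of_padicNorm_eq_zero (by exact_mod_cast h0)
    have : (a : ℚ) = b := by linarith [sub_eq_zero.mp hq0]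
    exact hne (by exact_mod_cast this)
  -- ### basic norm facts
  have hPmono : ∀ {a b : ℤ}, a ≤ b → (2:ℝ)^a ≤ (2:ℝ)^b :=
    fun h => zpow_le_zpow_right₀ one_le_two h
  have hPP : ∀ a b : ℤ, (2:ℝ)^a * (2:ℝ)^b = (2:ℝ)^(a+b) :=
    fun a b => (zpow_add₀ two_ne_zero a b).symm
  have h2K : ‖(2:K)‖ = (2:ℝ)^(-1:ℤ) := by
    have h := hext 2
    rw [show ((2:ℚ):K) = (2:K) by norm_num] at h
    rw [h, show (2:ℚ) = ((2:ℕ):ℚ) by norm_num, padicNorm.padicNorm_p one_lt_two]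
    norm_num
  have h3K : ‖(3:K)‖ = 1 := by
    have h := hext 3
    rw [show ((3:ℚ):K) = (3:K) by norm_num] at h
    have h2 : padicNorm 2 ((3:ℤ):ℚ) = 1 := (padicNorm.int_eq_one_iff (p := 2) 3).mpr (by decide)
    rw [h, show (3:ℚ) = ((3:ℤ):ℚ) by norm_num, h2]
    norm_num
  have h5K : ‖(5:K)‖ = 1 := by
    have h := hext 5
    rw [show ((5:ℚ):K) = (5:K) by norm_num] at h
    have h2 : padicNorm 2 ((5:ℤ):ℚ) = 1 := (padicNorm.int_eq_one_iff (p := 2) 5).mpr (by decide)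
    rw [h, show (5:ℚ) = ((5:ℤ):ℚ) by norm_num, h2]
    norm_num
  have hIntK : ∀ k : ℤ, ‖((k:ℚ):K)‖ ≤ 1 := fun k => by
    rw [hext]
    exact_mod_cast padicNorm.of_int k
  have h32K : ‖(3/2:K)‖ = (2:ℝ)^(1:ℤ) := by
    rw [norm_div, h3K, h2K]; norm_num
  have h94K : ‖(9/4:K)‖ = (2:ℝ)^(2:ℤ) := by
    rw [norm_div, show (9:K) = 3*3 by norm_num, show (4:K) = 2*2 by norm_num,
      norm_mul, norm_mul, h3K, h2K]
    norm_num
  have h45K : ‖(4/5:K)‖ = (2:ℝ)^(-2:ℤ) := by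
    rw [norm_div, show (4:K) = 2*2 by norm_num, norm_mul, h2K, h5K]
    norm_num
  have h310K : ‖(3/10:K)‖ = (2:ℝ)^(1:ℤ) := by
    rw [norm_div, show (10:K) = 2*5 by norm_num, norm_mul, h2K, h5K, h3K]
    norm_num
  have h12K : ‖(1/2:K)‖ = (2:ℝ)^(1:ℤ) := by
    rw [norm_div, norm_one, h2K]; norm_num
  -- ### setting
  set F : K → K := fun z : K => z ^ 3 - (3 / 2 : K) * t * z ^ 2 with hF
  set z : ℕ → K := fun n => F^[n] t with hz
  have hz0 : z 0 = t := by simp [hz]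
  have hzs : ∀ n, z (n+1) = (z n)^3 - (3/2:K)*t*(z n)^2 := by
    intro n
    simp only [hz, Function.iterate_succ_apply', hF]
  set τ : K := t - 1 with hτdef
  set e : K := t - (1 + 3 * 2 ^ (2 * m + 1)) with hedef
  have hτe : τ = (3 * 2 ^ (2*m+1) : K) + e := by rw [hτdef, hedef]; ring
  have hCnorm : ‖(3 * 2 ^ (2*m+1) : K)‖ ≤ (2:ℝ)^(-(2*(m:ℤ)+1)) := by
    rw [norm_mul, norm_pow, h3K, h2K, one_mul, ← zpow_natCast ((2:ℝ)^(-1:ℤ)), ← zpow_mul]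
    apply hPmono
    push_cast
    omega
  have hτnorm : ‖τ‖ ≤ (2:ℝ)^(-(2*(m:ℤ)+1)) := by
    rw [hτe]
    exact nadd hna hCnorm (ht.trans (hPmono (by omega)))
  have hτ1 : ‖τ‖ ≤ 1 := by
    refine hτnorm.trans ?_
    calc (2:ℝ)^(-(2*(m:ℤ)+1)) ≤ (2:ℝ)^(0:ℤ) := hPmono (by omega)
      _ = 1 := zpow_zero 2
  have ht1 : ‖t‖ ≤ 1 := by
    have : t = 1 + τ := by rw [hτdef]; ring
    rw [this]
    exact nadd hna (by rw [norm_one]) hτ1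
  set a : ℕ → ℚ := fun n => 3/10 - 4/5*(9/4)^n with hadef
  set w : ℕ → K := fun n => z n + 1/2 with hwdef
  set E : ℕ → K := fun n => w n - ((a n : ℚ) : K) * τ with hEdef
  have hwn : ∀ n, w n = z n + 1/2 := fun n => by rw [hwdef]
  have hEn : ∀ n, E n = w n - ((a n : ℚ) : K) * τ := fun n => by rw [hEdef]
  have haK : ∀ n, ((a n : ℚ) : K) = (3/10:K) - (4/5:K)*((9/4:K))^n := by
    intro n
    simp only [hadef]
    push_cast
    ring
  -- recurrence for w
  have hw_rec : ∀ n, w (n+1) = (9/4:K)*w n - (3/8:K)*τ +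
      ((w n)^2*(w n - 3) + (3/2:K)*τ*(w n)*(1 - w n)) := by
    intro n
    simp only [hwn, hτdef]
    rw [hzs n]
    ring
  have ha_rec : ∀ n, ((a (n+1) : ℚ) : K) = (9/4:K)*((a n : ℚ):K) - (3/8:K) := by
    intro n
    have h : a (n+1) = 9/4 * a n - 3/8 := by
      simp only [hadef]
      rw [pow_succ]
      ring
    rw [h]
    push_cast
    ring
  have hE_rec : ∀ n, E (n+1) = (9/4:K)*E n +
      ((w n)^2*(w n - 3) + (3/2:K)*τ*(w n)*(1 - w n)) := by
    intro n
    simp only [hEn]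
    rw [hw_rec n, ha_rec n]
    ring
  -- norm of a n
  have haN : ∀ n : ℕ, 2 ≤ n → ‖((a n : ℚ):K)‖ ≤ (2:ℝ)^(2*(n:ℤ)-2) := by
    intro n hn
    rw [haK n]
    apply nsub hna
    · rw [h310K]; exact hPmono (by omega)
    · have h : ‖(4/5:K)*((9/4:K))^n‖ ≤ (2:ℝ)^(-2:ℤ) * (2:ℝ)^(2*(n:ℤ)) := by
        apply nmul (le_of_eq h45K)
        rw [norm_pow, h94K, ← zpow_natCast ((2:ℝ)^(2:ℤ)), ← zpow_mul]
      refine h.trans ?_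
      rw [hPP]
      exact hPmono (by omega)
  -- bound on w n given bound on E n (for 2 ≤ n)
  have hwN : ∀ n : ℕ, 2 ≤ n → ‖E n‖ ≤ (2:ℝ)^(2*(n:ℤ)-(2*(m:ℤ)+6)) →
      ‖w n‖ ≤ (2:ℝ)^(2*(n:ℤ)-(2*(m:ℤ)+3)) := by
    intro n hn hE
    have h : w n = E n + ((a n : ℚ):K) * τ := by rw [hEn]; ring
    rw [h]
    apply nadd hna (hE.trans (hPmono (by omega)))
    refine (nmul (haN n hn) hτnorm).trans ?_
    rw [hPP]
    exact hPmono (by omega)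
  -- bound on the nonlinear term
  have hRN : ∀ n : ℕ, ∀ c : ℤ, ‖w n‖ ≤ (2:ℝ)^c → c ≤ 0 →
      ‖(w n)^2*(w n - 3) + (3/2:K)*τ*(w n)*(1 - w n)‖ ≤
        max ((2:ℝ)^(2*c)) ((2:ℝ)^(1 + (-(2*(m:ℤ)+1)) + c)) := by
    intro n c hw hc
    have hw1 : ‖w n‖ ≤ 1 := hw.trans (by simpa using hPmono hc)
    have hw3 : ‖w n - 3‖ ≤ 1 := nsub hna hw1 (le_of_eq h3K)
    have h1w : ‖1 - w n‖ ≤ 1 := nsub hna (le_of_eq norm_one) hw1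
    have hterm1 : ‖(w n)^2*(w n - 3)‖ ≤ (2:ℝ)^(2*c) := by
      have h : ‖(w n)^2*(w n - 3)‖ ≤ (2:ℝ)^c * (2:ℝ)^c * 1 := by
        apply nmul _ hw3
        rw [pow_two]
        exact nmul hw hw
      refine h.trans (le_of_eq ?_)
      rw [mul_one, hPP]
      ring_nf
    have hterm2 : ‖(3/2:K)*τ*(w n)*(1 - w n)‖ ≤ (2:ℝ)^(1 + (-(2*(m:ℤ)+1)) + c) := by
      have h : ‖(3/2:K)*τ*(w n)*(1 - w n)‖ ≤
          (2:ℝ)^(1:ℤ) * (2:ℝ)^(-(2*(m:ℤ)+1)) * (2:ℝ)^c * 1 :=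
        nmul (nmul (nmul (le_of_eq h32K) hτnorm) hw) h1w
      refine h.trans (le_of_eq ?_)
      rw [mul_one, hPP, hPP]
    exact (hna _ _).trans (max_le_max hterm1 hterm2)
  -- ### explicit first step
  have ha1 : ((a 1 : ℚ):K) = -(3/2:K) := by
    rw [show a 1 = -(3/2 : ℚ) by simp only [hadef]; norm_num]
    push_cast
    ring
  have hE1eq : E 1 = -((3/2:K)*τ^2 + (1/2:K)*τ^3) := by
    simp only [hEn, hwn, hτdef, ha1]
    rw [hzs 0, hz0]
    ring
  have hE1 : ‖E 1‖ ≤ (2:ℝ)^(-(4*(m:ℤ))-1) := by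
    rw [hE1eq, norm_neg]
    apply nadd hna
    · have h : ‖(3/2:K)*τ^2‖ ≤ (2:ℝ)^(1:ℤ) * ((2:ℝ)^(-(2*(m:ℤ)+1)) * (2:ℝ)^(-(2*(m:ℤ)+1))) := by
        apply nmul (le_of_eq h32K)
        rw [pow_two]
        exact nmul hτnorm hτnorm
      refine h.trans (le_of_eq ?_)
      rw [hPP, hPP]
      ring_nf
    · have h : ‖(1/2:K)*τ^3‖ ≤
          (2:ℝ)^(1:ℤ) * ((2:ℝ)^(-(2*(m:ℤ)+1)) * (2:ℝ)^(-(2*(m:ℤ)+1)) * 1) := by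
        apply nmul (le_of_eq h12K)
        rw [show (3:ℕ) = 2+1 by norm_num, pow_succ, pow_two]
        exact nmul (nmul hτnorm hτnorm) hτ1
      refine h.trans ?_
      rw [mul_one, hPP, hPP]
      exact hPmono (by omega)
  have hw1 : ‖w 1‖ ≤ (2:ℝ)^(-(2*(m:ℤ))) := by
    have heq : w 1 = E 1 + ((a 1 : ℚ):K) * τ := by rw [hEn]; ring
    rw [heq, ha1]
    apply nadd hna (hE1.trans (hPmono (by omega)))
    have h : ‖-(3/2:K) * τ‖ ≤ (2:ℝ)^(1:ℤ) * (2:ℝ)^(-(2*(m:ℤ)+1)) := by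
      apply nmul _ hτnorm
      rw [norm_neg]
      exact le_of_eq h32K
    refine h.trans ?_
    rw [hPP]
    exact hPmono (by omega)
  -- ### the key induction : ‖E n‖ ≤ 2^(2n - 2m - 6) for 2 ≤ n ≤ m+2
  have hEbound : ∀ n : ℕ, 2 ≤ n → n ≤ m+2 → ‖E n‖ ≤ (2:ℝ)^(2*(n:ℤ)-(2*(m:ℤ)+6)) := by
    intro n hn
    induction n, hn using Nat.le_induction with
    | base =>
      intro _
      have hR1 := hRN 1 (-(2*(m:ℤ))) hw1 (by omega)
      rw [hE_rec 1]
      apply nadd hna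
      · have h : ‖(9/4:K)*E 1‖ ≤ (2:ℝ)^(2:ℤ) * (2:ℝ)^(-(4*(m:ℤ))-1) :=
          nmul (le_of_eq h94K) hE1
        refine h.trans ?_
        rw [hPP]
        exact hPmono (by omega)
      · exact hR1.trans (max_le (hPmono (by omega)) (hPmono (by omega)))
    | succ n hn ih =>
      intro hn2
      have hEn' := ih (by omega)
      have hwn' := hwN n hn hEn'
      have hR := hRN n (2*(n:ℤ)-(2*(m:ℤ)+3)) hwn' (by omega)
      rw [hE_rec n]
      apply nadd hna
      · have h : ‖(9/4:K)*E n‖ ≤ (2:ℝ)^(2:ℤ) * (2:ℝ)^(2*(n:ℤ)-(2*(m:ℤ)+6)) :=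
          nmul (le_of_eq h94K) hEn'
        refine h.trans ?_
        rw [hPP]
        exact hPmono (by omega)
      · exact hR.trans (max_le (hPmono (by omega)) (hPmono (by omega)))
  have hEm2 : ‖E (m+2)‖ ≤ (2:ℝ)^(-2:ℤ) := by
    refine (hEbound (m+2) (by omega) le_rfl).trans (hPmono (by push_cast; omega))
  -- ### the rational constant has small norm
  set N : ℤ := 9*2^(2*m+1) - 3*9^(m+2) - 5 with hNdef
  have hkey : ((9:ℚ)/4)^(m+2) * (2:ℚ)^(2*m+1) = (9:ℚ)^(m+2)/8 := by
    have h4 : ((4:ℚ))^(m+2) = 2^(2*m+1)*8 := by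
      rw [show (4:ℚ) = 2^2 by norm_num, ← pow_mul, show 2*(m+2) = (2*m+1)+3 by ring, pow_add]
      norm_num
    have h2 : (2:ℚ)^(2*m+1) ≠ 0 := by positivity
    rw [div_pow, h4]
    field_simp
  have hq : a (m+2) * (3*2^(2*m+1)) - 1/2 = (N:ℚ)/10 := by
    simp only [hadef, hNdef]
    push_cast
    linear_combination (-12/5 : ℚ) * hkey
  have h9dvd : (8:ℤ) ∣ 9^(m+2) - 1 := by
    have h := sub_dvd_pow_sub_pow (9:ℤ) 1 (m+2)
    simpa using h
  obtain ⟨u, hu⟩ := h9dvd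
  have h2pow : (2:ℤ)^(2*m+1) = 8*2^(2*m-2) := by
    rw [show 2*m+1 = 3+(2*m-2) by omega, pow_add]
    norm_num
  have hNdvd : (8:ℤ) ∣ N := by
    refine ⟨9*2^(2*m-2) - 3*u - 1, ?_⟩
    rw [hNdef, h2pow]
    linear_combination (-3:ℤ)*hu
  obtain ⟨M, hM⟩ := hNdvd
  have hqK : ‖((a (m+2) * (3*2^(2*m+1)) - 1/2 : ℚ) : K)‖ ≤ (2:ℝ)^(-2:ℤ) := by
    rw [hq]
    have hcast : (((N:ℚ)/10 : ℚ) : K) = ((8:K)*((M:ℚ):K))/10 := by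
      rw [hM]; push_cast; ring
    have h8 : ‖(8:K)‖ = (2:ℝ)^(-3:ℤ) := by
      rw [show (8:K) = 2*(2*2) by norm_num, norm_mul, norm_mul, h2K]
      norm_num
    have h10 : ‖(10:K)‖ = (2:ℝ)^(-1:ℤ) := by
      rw [show (10:K) = 2*5 by norm_num, norm_mul, h2K, h5K]
      norm_num
    rw [hcast, norm_div, norm_mul, h8, h10]
    have hM1 := hIntK M
    have hM0 := norm_nonneg ((M:ℚ):K)
    rw [show ((2:ℝ)^(-1:ℤ)) = 1/2 by norm_num, show ((2:ℝ)^(-2:ℤ)) = 1/4 by norm_num,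
      show ((2:ℝ)^(-3:ℤ)) = 1/8 by norm_num, div_le_iff₀ (by norm_num : (0:ℝ) < 1/2)]
    nlinarith
  -- ### the orbit lands in the ball of radius 1/2 at time m+2
  have hsplit : z (m+2) = E (m+2) + ((a (m+2) : ℚ):K) * e +
      ((a (m+2) * (3*2^(2*m+1)) - 1/2 : ℚ) : K) := by
    have hcast : ((a (m+2) * (3*2^(2*m+1)) - 1/2 : ℚ) : K) =
        ((a (m+2) : ℚ):K) * ((3:K)*2^(2*m+1)) - (1/2:K) := by
      push_cast
      ring
    have h1 : z (m+2) = w (m+2) - 1/2 := by rw [hwn]; ring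
    rw [hcast, h1, hEn, hτe]
    ring
  have hland : ‖z (m+2)‖ ≤ (2:ℝ)^(-1:ℤ) := by
    rw [hsplit]
    apply nadd hna (nadd hna (hEm2.trans (hPmono (by omega))) ?_) (hqK.trans (hPmono (by omega)))
    refine (nmul (haN (m+2) (by omega)) ht).trans ?_
    rw [hPP]
    exact hPmono (by push_cast; omega)
  -- ### the ball of radius 1/2 is forward invariant
  have hinv : ∀ x : K, ‖x‖ ≤ (2:ℝ)^(-1:ℤ) → ‖x^3 - (3/2:K)*t*x^2‖ ≤ (2:ℝ)^(-1:ℤ) := by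
    intro x hx
    have hfac : x^3 - (3/2:K)*t*x^2 = x*x*(x - (3/2:K)*t) := by ring
    rw [hfac]
    have h1 : ‖x - (3/2:K)*t‖ ≤ (2:ℝ)^(1:ℤ) := by
      apply nsub hna (hx.trans (hPmono (by omega)))
      have h := nmul (le_of_eq h32K) ht1
      simpa using h
    refine (nmul (nmul hx hx) h1).trans ?_
    rw [hPP, hPP]
    exact hPmono (by omega)
  have htail : ∀ k : ℕ, ‖z (m+2+k)‖ ≤ (2:ℝ)^(-1:ℤ) := by
    intro k
    induction k with
    | zero => exact hland
    | succ k ih =>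
      rw [show m+2+(k+1) = (m+2+k)+1 by omega, hzs]
      exact hinv _ ih
  -- ### conclusion
  have hne : (Finset.range (m+3)).Nonempty := Finset.nonempty_range_iff.mpr (by omega)
  refine ⟨max ((2:ℝ)^(-1:ℤ)) ((Finset.range (m+3)).sup' hne (fun n => ‖z n‖)), ?_⟩
  intro n
  show ‖z n‖ ≤ _
  rcases le_or_gt (m+2) n with h | h
  · obtain ⟨k, rfl⟩ := Nat.exists_eq_add_of_le h
    exact (htail k).trans (le_max_left _ _)
  · exact (Finset.le_sup' (fun n => ‖z n‖) (Finset.mem_range.mpr (by omega))).trans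
      (le_max_right _ _)
end

section
/- Let k ≥ 2 be an integer and let t ∈ K satisfy |t − (1 + 2^{2k})| ≤ 2^{−(2k+1)}. Then for f_t(z) = z³ − (3/2) t z² one has |f_t(t) + 1/2| ≤ 2^{−(2k−1)}, and for every integer i with 2 ≤ i ≤ k, |f_tⁱ(t) + 1/2| = 2^{−(2k−2i+2)}. -/
private lemma two_zpow_mul (a b : ℤ) : (2:ℝ)^a * (2:ℝ)^b = (2:ℝ)^(a+b) :=
  (zpow_add₀ two_ne_zero a b).symm

private lemma two_zpow_lt {a b : ℤ} (h : a < b) : (2:ℝ)^a < (2:ℝ)^b :=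
  zpow_lt_zpow_right₀ one_lt_two h

private lemma two_zpow_le {a b : ℤ} (h : a ≤ b) : (2:ℝ)^a ≤ (2:ℝ)^b :=
  zpow_le_zpow_right₀ one_le_two h

private lemma two_zpow_pow' (a c : ℤ) (n : ℕ) (h : a * n = c) :
    ((2:ℝ)^a)^n = (2:ℝ)^c := by
  rw [← zpow_natCast ((2:ℝ)^a) n, ← zpow_mul, h]

private lemma two_mul_zpow (a : ℤ) : (2:ℝ) * (2:ℝ)^a = (2:ℝ)^(1+a) := by
  have h := zpow_add₀ (two_ne_zero (α := ℝ)) 1 a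
  rw [zpow_one] at h
  exact h.symm

private lemma four_mul_zpow (a : ℤ) : (4:ℝ) * (2:ℝ)^a = (2:ℝ)^(2+a) := by
  rw [zpow_add₀ (two_ne_zero (α := ℝ))]; norm_num

private lemma eight_mul_zpow (a : ℤ) : (8:ℝ) * (2:ℝ)^a = (2:ℝ)^(3+a) := by
  rw [zpow_add₀ (two_ne_zero (α := ℝ))]; norm_num

private lemma na_le_s17 {K : Type*} [NormedField K]
    (hna : IsNonarchimedean (fun x : K => ‖x‖)) (a b : K) :
    ‖a + b‖ ≤ max ‖a‖ ‖b‖ := hna a b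

private lemma na_add {K : Type*} [NormedField K]
    (hna : IsNonarchimedean (fun x : K => ‖x‖)) {a b : K} (h : ‖b‖ < ‖a‖) :
    ‖a + b‖ = ‖a‖ := by
  refine le_antisymm (le_trans (na_le_s17 hna a b) (max_le le_rfl h.le)) ?_
  have h2 : ‖a‖ ≤ max ‖a + b‖ ‖b‖ := by
    have := na_le_s17 hna (a + b) (-b)
    simpa using this
  rcases le_max_iff.mp h2 with h' | h'
  · exact h'
  · exact absurd h' (not_le.mpr h)

private lemma na_three {K : Type*} [NormedField K]
    (hna : IsNonarchimedean (fun x : K => ‖x‖)) {a b c : K} {C : ℝ}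
    (ha : ‖a‖ < C) (hb : ‖b‖ < C) (hc : ‖c‖ < C) : ‖a + b + c‖ < C := by
  have h1 : ‖a + b‖ ≤ max ‖a‖ ‖b‖ := na_le_s17 hna a b
  have h2 : ‖a + b + c‖ ≤ max ‖a + b‖ ‖c‖ := na_le_s17 hna (a+b) c
  exact lt_of_le_of_lt h2 (max_lt (lt_of_le_of_lt h1 (max_lt ha hb)) hc)

private lemma step_lemma {K : Type*} [NormedField K]
    (hna : IsNonarchimedean (fun x : K => ‖x‖))
    (h2 : ‖(2:K)‖ = 1/2) (h3 : ‖(3:K)‖ = 1) (h9 : ‖(9:K)‖ = 1)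
    (t x : K) (n m : ℤ) (hs : ‖t - 1‖ = (2:ℝ)^(-n))
    (hm2 : 2 ≤ m) (hmn : m < n - 1)
    (hx : ‖x + 1/2‖ = (2:ℝ)^(-m)) :
    ‖(x^3 - (3/2:K)*t*x^2) + 1/2‖ = (2:ℝ)^(-(m-2)) := by
  have h2ne : (2:K) ≠ 0 := by
    intro h; rw [h, norm_zero] at h2; norm_num at h2
  have h4ne : (4:K) ≠ 0 := by
    rw [show (4:K) = 2^2 by norm_num]; exact pow_ne_zero _ h2ne
  have hhalf : ‖(1/2 : K)‖ = 2 := by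
    rw [show (1/2:K) = (2:K)⁻¹ by norm_num, norm_inv, h2]; norm_num
  have h4 : ‖(4:K)‖ = 1/4 := by
    rw [show (4:K) = 2^2 by norm_num, norm_pow, h2]; norm_num
  have h94 : ‖(9/4:K)‖ = 4 := by rw [norm_div, h9, h4]; norm_num
  have h32 : ‖(3/2:K)‖ = 2 := by rw [norm_div, h3, h2]; norm_num
  have hxnorm : ‖x‖ = 2 := by
    have hlt : ‖x + 1/2‖ < ‖-(1/2:K)‖ := by
      rw [norm_neg, hhalf, hx]
      calc (2:ℝ)^(-m) < 2^(1:ℤ) := two_zpow_lt (by omega)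
        _ = 2 := by norm_num
    have h := na_add hna hlt
    rw [show -(1/2:K) + (x + 1/2) = x by ring, norm_neg, hhalf] at h
    exact h
  have hid : (x^3 - (3/2:K)*t*x^2) + 1/2
      = (9/4:K)*(x+1/2) + ((x+1/2)^3 + (-(3*(x+1/2)^2)) + (-((3/2:K)*(t-1)*x^2))) := by
    have hu : (2:K) * (2:K)⁻¹ = 1 := mul_inv_cancel₀ h2ne
    rw [show (3/2:K) = 3*(2:K)⁻¹ from div_eq_mul_inv 3 2,
      show (1/2:K) = (2:K)⁻¹ from one_div 2,
      show (9/4:K) = 9*((2:K)⁻¹)^2 by rw [show (4:K) = 2^2 by norm_num, div_eq_mul_inv, ← inv_pow]]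
    linear_combination (-(2:K)⁻¹ - 5*((2:K)⁻¹)^2 - 6*x*(2:K)⁻¹ - 3*x^2) * hu
  have hA : ‖(9/4:K)*(x+1/2)‖ = (2:ℝ)^(-(m-2)) := by
    rw [norm_mul, h94, hx, four_mul_zpow]
    congr 1; omega
  have hB : ‖(x+1/2)^3 + (-(3*(x+1/2)^2)) + (-((3/2:K)*(t-1)*x^2))‖ < (2:ℝ)^(-(m-2)) := by
    apply na_three hna
    · rw [norm_pow, hx, two_zpow_pow' (-m) (-(3*m)) 3 (by push_cast; ring)]
      exact two_zpow_lt (by omega)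
    · rw [norm_neg, norm_mul, h3, one_mul, norm_pow, hx,
        two_zpow_pow' (-m) (-(2*m)) 2 (by push_cast; ring)]
      exact two_zpow_lt (by omega)
    · rw [norm_neg, norm_mul, norm_mul, h32, hs, norm_pow, hxnorm]
      calc (2:ℝ) * 2^(-n) * 2^(2:ℕ)
          = 4 * ((2:ℝ) * 2^(-n)) := by norm_num; ring
        _ = 4 * (2:ℝ)^(1 + -n) := by rw [two_mul_zpow]
        _ = (2:ℝ)^(2 + (1 + -n)) := four_mul_zpow _
        _ < (2:ℝ)^(-(m-2)) := two_zpow_lt (by omega)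
  rw [hid, na_add hna (by rw [hA]; exact hB), hA]

/-- Let `k ≥ 2` and `t ∈ K` with `|t - (1 + 2^(2k))| ≤ 2^(-(2k+1))`.
Then for `f_t(z) = z³ - (3/2) t z²` one has `|f_t(t) + 1/2| ≤ 2^(-(2k-1))`, and for
every `2 ≤ i ≤ k`, `|f_tⁱ(t) + 1/2| = 2^(-(2k-2i+2))`. -/
theorem stmt_17 (K : Type*) [NormedField K] [IsAlgClosed K] [CompleteSpace K]
    (hna : IsNonarchimedean (fun x : K => ‖x‖))
    (hext : ∀ q : ℚ, ‖(q : K)‖ = (padicNorm 2 q : ℝ))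
    (k : ℕ) (hk : 2 ≤ k)
    (t : K) (ht : ‖t - (1 + 2 ^ (2 * k))‖ ≤ (2 : ℝ) ^ (-(2 * (k : ℤ) + 1))) :
    ‖(t ^ 3 - (3 / 2 : K) * t * t ^ 2) + 1 / 2‖ ≤ (2 : ℝ) ^ (-(2 * (k : ℤ) - 1)) ∧
    ∀ i : ℕ, 2 ≤ i → i ≤ k →
      ‖(fun z : K => z ^ 3 - (3 / 2 : K) * t * z ^ 2)^[i] t + 1 / 2‖ =
        (2 : ℝ) ^ (-(2 * (k : ℤ) - 2 * (i : ℤ) + 2)) := by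
  haveI : Fact (Nat.Prime 2) := ⟨by norm_num⟩
  -- norms of constants
  have h2 : ‖(2:K)‖ = 1/2 := by
    have h := hext 2
    rw [Rat.cast_ofNat] at h
    have hq : padicNorm 2 2 = 1/2 := by
      rw [show (2:ℚ) = ((2:ℕ):ℚ) by norm_num, padicNorm.padicNorm_p (by norm_num)]
      norm_num
    rw [h, hq]; norm_num
  have hodd : ∀ n : ℕ, ¬ 2 ∣ n → ‖(n:K)‖ = 1 := by
    intro n hn
    have h := hext n
    rw [Rat.cast_natCast] at h
    rw [h, (padicNorm.nat_eq_one_iff n).mpr hn]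
    norm_num
  have h3 : ‖(3:K)‖ = 1 := by
    have := hodd 3 (by norm_num); simpa using this
  have h9 : ‖(9:K)‖ = 1 := by
    have := hodd 9 (by norm_num); simpa using this
  have h15 : ‖(15:K)‖ = 1 := by
    have := hodd 15 (by norm_num); simpa using this
  have h27 : ‖(27:K)‖ = 1 := by
    have := hodd 27 (by norm_num); simpa using this
  have h2ne : (2:K) ≠ 0 := by
    intro h; rw [h, norm_zero] at h2; norm_num at h2
  have h4ne : (4:K) ≠ 0 := by
    rw [show (4:K) = 2^2 by norm_num]; exact pow_ne_zero _ h2ne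
  have h8ne : (8:K) ≠ 0 := by
    rw [show (8:K) = 2^3 by norm_num]; exact pow_ne_zero _ h2ne
  have hhalf : ‖(1/2 : K)‖ = 2 := by
    rw [show (1/2:K) = (2:K)⁻¹ by norm_num, norm_inv, h2]; norm_num
  have h4 : ‖(4:K)‖ = 1/4 := by
    rw [show (4:K) = 2^2 by norm_num, norm_pow, h2]; norm_num
  have h8 : ‖(8:K)‖ = 1/8 := by
    rw [show (8:K) = 2^3 by norm_num, norm_pow, h2]; norm_num
  have h32 : ‖(3/2:K)‖ = 2 := by rw [norm_div, h3, h2]; norm_num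
  have h154 : ‖(15/4:K)‖ = 4 := by rw [norm_div, h15, h4]; norm_num
  have h278 : ‖(27/8:K)‖ = 8 := by rw [norm_div, h27, h8]; norm_num
  have h98 : ‖(9/8:K)‖ = 8 := by rw [norm_div, h9, h8]; norm_num
  -- ‖t - 1‖ = 2^(-2k)
  have hcast : ((2*k:ℕ):ℤ) = 2*(k:ℤ) := by push_cast; ring
  have hp2k : ‖(2:K)^(2*k)‖ = (2:ℝ)^(-(2*(k:ℤ))) := by
    rw [norm_pow, h2, one_div, inv_pow, ← zpow_natCast, ← zpow_neg, hcast]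
  have hs : ‖t - 1‖ = (2:ℝ)^(-(2*(k:ℤ))) := by
    have hlt : ‖t - (1 + 2^(2*k))‖ < ‖(2:K)^(2*k)‖ := by
      rw [hp2k]
      exact lt_of_le_of_lt ht (two_zpow_lt (by omega))
    have h := na_add hna hlt
    rw [show (2:K)^(2*k) + (t - (1 + 2^(2*k))) = t - 1 by ring, hp2k] at h
    exact h
  have hle1 : (2:ℝ)^(-(2*(k:ℤ))) ≤ 1 := by
    calc (2:ℝ)^(-(2*(k:ℤ))) ≤ 2^(0:ℤ) := two_zpow_le (by omega)
      _ = 1 := by norm_num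
  -- the first iterate
  have hδ1 : ‖(t ^ 3 - (3 / 2 : K) * t * t ^ 2) + 1 / 2‖ = (2:ℝ)^(-(2*(k:ℤ)-1)) := by
    have hid1 : (t ^ 3 - (3 / 2 : K) * t * t ^ 2) + 1 / 2
        = -(1/2:K) * (t-1) * ((3:K) + (3*(t-1) + (t-1)^2)) := by
      have hu : (2:K) * (2:K)⁻¹ = 1 := mul_inv_cancel₀ h2ne
      rw [show (3/2:K) = 3*(2:K)⁻¹ from div_eq_mul_inv 3 2,
        show (1/2:K) = (2:K)⁻¹ from one_div 2]
      linear_combination (-(t^3)) * hu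
    have hw : ‖(3:K) + (3*(t-1) + (t-1)^2)‖ = 1 := by
      have hwlt : ‖3*(t-1) + (t-1)^2‖ < ‖(3:K)‖ := by
        rw [h3]
        refine lt_of_le_of_lt (na_le_s17 hna (3*(t-1)) ((t-1)^2)) (max_lt ?_ ?_)
        · rw [norm_mul, h3, one_mul, hs]
          calc (2:ℝ)^(-(2*(k:ℤ))) < 2^(0:ℤ) := two_zpow_lt (by omega)
            _ = 1 := by norm_num
        · rw [norm_pow, hs, two_zpow_pow' (-(2*(k:ℤ))) (-(4*(k:ℤ))) 2 (by push_cast; ring)]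
          calc (2:ℝ)^(-(4*(k:ℤ))) < 2^(0:ℤ) := two_zpow_lt (by omega)
            _ = 1 := by norm_num
      rw [na_add hna hwlt, h3]
    rw [hid1, norm_mul, norm_mul, norm_neg, hhalf, hs, hw, mul_one, two_mul_zpow]
    congr 1; omega
  refine ⟨le_of_eq hδ1, ?_⟩
  -- abbreviations
  set G : K → K := fun z : K => z ^ 3 - (3 / 2 : K) * t * z ^ 2 with hG
  have eG : ∀ y : K, G y = y ^ 3 - (3 / 2 : K) * t * y ^ 2 := fun y => rfl
  set D : K := (t ^ 3 - (3 / 2 : K) * t * t ^ 2) + 1 / 2 with hD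
  have hDnorm : ‖D‖ = (2:ℝ)^(-(2*(k:ℤ)-1)) := hδ1
  have hDle : ‖D‖ < 1 := by
    rw [hDnorm]
    calc (2:ℝ)^(-(2*(k:ℤ)-1)) < 2^(0:ℤ) := two_zpow_lt (by omega)
      _ = 1 := by norm_num
  -- the second iterate
  have hδ2 : ‖G (G t) + 1/2‖ = (2:ℝ)^(-(2*(k:ℤ)-2)) := by
    have hid2 : G (G t) + 1/2
        = -((15/4:K)*(t-1)) + ((-(27/8:K) - (9/8:K)*(t-1))*(t-1)^2
            + (3/2:K)*(t-1)*D*(1-D) + D^2*(D-3)) := by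
      have hu : (2:K) * (2:K)⁻¹ = 1 := mul_inv_cancel₀ h2ne
      simp only [eG]
      rw [hD]
      rw [show (3/2:K) = 3*(2:K)⁻¹ from div_eq_mul_inv 3 2,
        show (1/2:K) = (2:K)⁻¹ from one_div 2,
        show (15/4:K) = 15*((2:K)⁻¹)^2 by
          rw [show (4:K) = 2^2 by norm_num, div_eq_mul_inv, ← inv_pow],
        show (27/8:K) = 27*((2:K)⁻¹)^3 by
          rw [show (8:K) = 2^3 by norm_num, div_eq_mul_inv, ← inv_pow],
        show (9/8:K) = 9*((2:K)⁻¹)^3 by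
          rw [show (8:K) = 2^3 by norm_num, div_eq_mul_inv, ← inv_pow]]
      linear_combination (-(2:K)⁻¹ + 7*((2:K)⁻¹)^2 - 12*t*((2:K)⁻¹)^2 - 9*t^3*(2:K)⁻¹
        + 18*t^3*((2:K)⁻¹)^2 + 3*t^4*(2:K)⁻¹ - 9*t^4*((2:K)⁻¹)^2 - 3*t^6
        + 18*t^6*(2:K)⁻¹ - 27*t^6*((2:K)⁻¹)^2) * hu
    have hmain : ‖-((15/4:K)*(t-1))‖ = (2:ℝ)^(-(2*(k:ℤ)-2)) := by
      rw [norm_neg, norm_mul, h154, hs, four_mul_zpow]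
      congr 1; omega
    have hT1 : ‖(-(27/8:K) - (9/8:K)*(t-1))*(t-1)^2‖ < (2:ℝ)^(-(2*(k:ℤ)-2)) := by
      have hc : ‖-(27/8:K) - (9/8:K)*(t-1)‖ ≤ 8 := by
        have h := na_le_s17 hna (-(27/8:K)) (-((9/8:K)*(t-1)))
        rw [show -(27/8:K) + -((9/8:K)*(t-1)) = -(27/8:K) - (9/8:K)*(t-1) by ring] at h
        refine le_trans h (max_le ?_ ?_)
        · rw [norm_neg, h278]
        · rw [norm_neg, norm_mul, h98, hs]
          calc (8:ℝ) * 2^(-(2*(k:ℤ))) ≤ 8 * 1 :=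
                mul_le_mul_of_nonneg_left hle1 (by norm_num)
            _ = 8 := by norm_num
      have e : ‖(t-1)^2‖ = (2:ℝ)^(-(4*(k:ℤ))) := by
        rw [norm_pow, hs, two_zpow_pow' (-(2*(k:ℤ))) (-(4*(k:ℤ))) 2 (by push_cast; ring)]
      rw [norm_mul, e]
      calc ‖-(27/8:K) - (9/8:K)*(t-1)‖ * (2:ℝ)^(-(4*(k:ℤ)))
          ≤ 8 * (2:ℝ)^(-(4*(k:ℤ))) := mul_le_mul_of_nonneg_right hc (by positivity)
        _ = (2:ℝ)^(3 + -(4*(k:ℤ))) := eight_mul_zpow _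
        _ < (2:ℝ)^(-(2*(k:ℤ)-2)) := two_zpow_lt (by omega)
    have hT2 : ‖(3/2:K)*(t-1)*D*(1-D)‖ < (2:ℝ)^(-(2*(k:ℤ)-2)) := by
      have h1D : ‖(1:K) - D‖ ≤ 1 := by
        have h := na_le_s17 hna 1 (-D)
        rw [show (1:K) + -D = 1 - D by ring] at h
        refine le_trans h (max_le (by simp) ?_)
        rw [norm_neg]
        exact hDle.le
      rw [norm_mul, norm_mul, norm_mul, h32, hs, hDnorm]
      calc (2:ℝ) * 2^(-(2*(k:ℤ))) * 2^(-(2*(k:ℤ)-1)) * ‖(1:K) - D‖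
          ≤ (2:ℝ) * 2^(-(2*(k:ℤ))) * 2^(-(2*(k:ℤ)-1)) * 1 :=
            mul_le_mul_of_nonneg_left h1D (by positivity)
        _ = (2:ℝ)^(1 + -(2*(k:ℤ)) + -(2*(k:ℤ)-1)) := by
            rw [mul_one, two_mul_zpow, two_zpow_mul]
        _ < (2:ℝ)^(-(2*(k:ℤ)-2)) := two_zpow_lt (by omega)
    have hT3 : ‖D^2*(D-3)‖ < (2:ℝ)^(-(2*(k:ℤ)-2)) := by
      have hD3 : ‖D - (3:K)‖ ≤ 1 := by
        have h := na_le_s17 hna D (-3)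
        rw [show D + -(3:K) = D - 3 by ring] at h
        refine le_trans h (max_le hDle.le ?_)
        rw [norm_neg, h3]
      rw [norm_mul, norm_pow, hDnorm]
      calc ((2:ℝ)^(-(2*(k:ℤ)-1)))^2 * ‖D - (3:K)‖
          ≤ ((2:ℝ)^(-(2*(k:ℤ)-1)))^2 * 1 :=
            mul_le_mul_of_nonneg_left hD3 (by positivity)
        _ = (2:ℝ)^(-(4*(k:ℤ)) + 2) := by
            rw [mul_one, two_zpow_pow' (-(2*(k:ℤ)-1)) (-(4*(k:ℤ)) + 2) 2 (by push_cast; ring)]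
        _ < (2:ℝ)^(-(2*(k:ℤ)-2)) := two_zpow_lt (by omega)
    have hR : ‖(-(27/8:K) - (9/8:K)*(t-1))*(t-1)^2
        + (3/2:K)*(t-1)*D*(1-D) + D^2*(D-3)‖ < ‖-((15/4:K)*(t-1))‖ := by
      rw [hmain]
      exact na_three hna hT1 hT2 hT3
    rw [hid2, na_add hna hR, hmain]
  -- induction
  intro i hi2
  induction i, hi2 using Nat.le_induction with
  | base =>
    intro _
    have e2 : G^[2] t = G (G t) := rfl
    rw [e2, hδ2]
    congr 1; omega
  | succ i hi2 IH =>
    intro hik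
    have hIH := IH (by omega)
    have hstep := step_lemma hna h2 h3 h9 t (G^[i] t) (2*(k:ℤ))
      (2 * (k:ℤ) - 2 * (i:ℤ) + 2) hs (by omega) (by omega) hIH
    rw [Function.iterate_succ_apply', eG, hstep]
    congr 1; push_cast; ring
end
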